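/- Let S_0, S_1, ..., S_n be i.i.d. real-valued random variables with a continuous distribution (so that all values are almost surely distinct), and define p = (1 + #{i ∈ {1,...,n} : S_i ≥ S_0}) / (n + 1). Then p is uniformly distributed on the finite set {1/(n+1), 2/(n+1), ..., (n+1)/(n+1)}, i.e., P(p = k/(n+1)) = 1/(n+1) for every k ∈ {1, ..., n+1}. -/

import Mathlib

open MeasureTheory ProbabilityTheory Finset

section Aux

private noncomputable def rk {n : ℕ} (j : Fin (n + 1)) (x : Fin (n + 1) → ℝ) : ℕ :=
  (Finset.univ.filter (fun i => x j < x i)).card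

private lemma rk_measurable {n : ℕ} (j : Fin (n + 1)) :
    Measurable (fun x : Fin (n + 1) → ℝ => rk j x) := by
  have h : (fun x : Fin (n + 1) → ℝ => rk j x)
      = fun x => ∑ i, if x j < x i then 1 else 0 := by
    funext x; rw [rk, Finset.card_filter]
  rw [h]
  exact Finset.measurable_sum _ fun i _ =>
    Measurable.ite (measurableSet_lt (measurable_pi_apply j) (measurable_pi_apply i))
      measurable_const measurable_const

private lemma rk_lt_of_lt {n : ℕ} {x : Fin (n + 1) → ℝ} {j j' : Fin (n + 1)}
    (h : x j < x j') : rk j' x < rk j x := by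
  apply Finset.card_lt_card
  constructor
  · intro i hi
    simp only [Finset.mem_filter, Finset.mem_univ, true_and] at hi ⊢
    exact h.trans hi
  · intro hsub
    have hj' : j' ∈ Finset.univ.filter (fun i => x j < x i) := by
      simp [h]
    have := hsub hj'
    simp at this

private lemma rk_injective {n : ℕ} {x : Fin (n + 1) → ℝ} (hx : Function.Injective x) :
    Function.Injective (fun j => rk j x) := by
  intro j j' h
  by_contra hne
  rcases lt_or_gt_of_ne (fun hxx => hne (hx hxx)) with hlt | hlt
  · exact absurd h.symm (Nat.ne_of_lt (rk_lt_of_lt hlt))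
  · exact absurd h (Nat.ne_of_lt (rk_lt_of_lt hlt))

private lemma rk_le {n : ℕ} (j : Fin (n + 1)) (x : Fin (n + 1) → ℝ) : rk j x ≤ n := by
  have hsub : Finset.univ.filter (fun i => x j < x i) ⊆ Finset.univ.erase j := by
    intro i hi
    simp only [Finset.mem_filter, Finset.mem_univ, true_and] at hi
    refine Finset.mem_erase.2 ⟨?_, Finset.mem_univ _⟩
    rintro rfl; exact lt_irrefl _ hi
  have := Finset.card_le_card hsub
  simpa [rk, Finset.card_erase_of_mem] using this

private lemma rk_existsUnique {n : ℕ} {x : Fin (n + 1) → ℝ} (hx : Function.Injective x)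
    {m : ℕ} (hm : m ≤ n) : ∃! j, rk j x = m := by
  have hinj : Function.Injective
      (fun j : Fin (n + 1) => (⟨rk j x, Nat.lt_succ_of_le (rk_le j x)⟩ : Fin (n + 1))) := by
    intro a b hab
    exact rk_injective hx (by simpa [Fin.ext_iff] using hab)
  have hsurj := Finite.surjective_of_injective hinj
  obtain ⟨j, hj⟩ := hsurj ⟨m, Nat.lt_succ_of_le hm⟩
  refine ⟨j, by simpa [Fin.ext_iff] using hj, ?_⟩
  intro j' hj'
  have hjx : rk j x = m := by simpa [Fin.ext_iff] using hj
  exact rk_injective hx (show rk j' x = rk j x from hj'.trans hjx.symm)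

private lemma card_filter_comp {α β : Type*} [Fintype α] [Fintype β] [DecidableEq α]
    [DecidableEq β] (e : α ≃ β) (P : β → Prop) [DecidablePred P] :
    (Finset.univ.filter (fun a => P (e a))).card = (Finset.univ.filter P).card := by
  refine Finset.card_nbij' e e.symm ?_ ?_ ?_ ?_
  · intro a ha; simp only [Finset.coe_filter, Set.mem_setOf_eq] at ha ⊢
    simpa using ha
  · intro b hb; simp only [Finset.coe_filter, Set.mem_setOf_eq] at hb ⊢
    simpa using hb
  · intro a _; simp
  · intro b _; simp

private lemma card_succ_eq_rk {n : ℕ} {x : Fin (n + 1) → ℝ} (hx : Function.Injective x) :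
    ((Finset.univ.filter (fun i : Fin n => x i.succ ≥ x 0)).card) = rk 0 x := by
  unfold rk
  refine Finset.card_bij' (fun i _ => i.succ) (fun j hj => j.pred ?_) ?_ ?_ ?_ ?_
  · simp only [Finset.mem_filter, Finset.mem_univ, true_and] at hj
    rintro rfl; exact lt_irrefl _ hj
  · intro i hi
    simp only [Finset.mem_filter, Finset.mem_univ, true_and] at hi ⊢
    exact lt_of_le_of_ne hi (fun h => (Fin.succ_ne_zero i) (hx h.symm))
  · intro j hj
    simp only [Finset.mem_filter, Finset.mem_univ, true_and] at hj ⊢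
    rw [Fin.succ_pred]
    exact le_of_lt hj
  · intro i _; exact Fin.pred_succ _
  · intro j _; exact Fin.succ_pred _ _

end Aux

/-- The conformal p-value from i.i.d. continuous scores is uniformly distributed on
the grid {1/(n+1), ..., (n+1)/(n+1)}. -/
theorem conformal_pvalue_discrete_uniform
    {Ω : Type*} [MeasurableSpace Ω] (μ : Measure Ω) [IsProbabilityMeasure μ]
    {n : ℕ} (S : Fin (n + 1) → Ω → ℝ) (hmeas : ∀ i, Measurable (S i))
    (hindep : iIndepFun (m := fun _ => Real.measurableSpace) S μ)
    (hident : ∀ i, Measure.map (S i) μ = Measure.map (S 0) μ)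
    (hcont : ∀ x : ℝ, Measure.map (S 0) μ {x} = 0)
    (p : Ω → ℝ)
    (hp : ∀ ω, p ω =
      (1 + ((Finset.univ.filter (fun i : Fin n => S i.succ ω ≥ S 0 ω)).card : ℝ)) / (n + 1)) :
    ∀ k : ℕ, 1 ≤ k → k ≤ n + 1 →
      μ {ω | p ω = (k : ℝ) / (n + 1)} = 1 / (n + 1) := by
  classical
  set ν : Measure ℝ := Measure.map (S 0) μ with hν
  have hνprob : IsProbabilityMeasure ν := Measure.isProbabilityMeasure_map (hmeas 0).aemeasurable
  set T : Ω → (Fin (n + 1) → ℝ) := fun ω i => S i ω with hT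
  have hTmeas : Measurable T := measurable_pi_lambda _ fun i => hmeas i
  set π : Measure (Fin (n + 1) → ℝ) := Measure.pi (fun _ => ν) with hπ
  -- joint law is the product measure
  have hmap : Measure.map T μ = π := by
    rw [hπ]
    refine (Measure.pi_eq fun s hs => ?_).symm
    rw [Measure.map_apply hTmeas (MeasurableSet.univ_pi hs)]
    have hpre : T ⁻¹' Set.pi Set.univ s = ⋂ i ∈ Finset.univ, S i ⁻¹' s i := by
      ext ω; simp [hT, Set.mem_pi]
    rw [hpre, hindep.measure_inter_preimage_eq_mul Finset.univ (fun i _ => hs i)]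
    refine Finset.prod_congr rfl fun i _ => ?_
    rw [← Measure.map_apply (hmeas i) (hs i), hident i]
  -- a.s. injectivity
  have hdiag : ∀ i j : Fin (n + 1), i ≠ j → μ {ω | S i ω = S j ω} = 0 := by
    intro i j hij
    have hIndep : IndepFun (S i) (S j) μ := hindep.indepFun hij
    have hmm : Measure.map (fun ω => (S i ω, S j ω)) μ = ν.prod ν := by
      rw [(indepFun_iff_map_prod_eq_prod_map_map (hmeas i).aemeasurable
        (hmeas j).aemeasurable).1 hIndep, hident i, hident j]
    have hset : {ω | S i ω = S j ω} = (fun ω => (S i ω, S j ω)) ⁻¹' {q : ℝ × ℝ | q.1 = q.2} := rfl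
    have hDm : MeasurableSet {q : ℝ × ℝ | q.1 = q.2} :=
      measurableSet_eq_fun measurable_fst measurable_snd
    rw [hset, ← Measure.map_apply ((hmeas i).prodMk (hmeas j)) hDm, hmm,
      Measure.prod_apply hDm]
    have h0 : ∀ x : ℝ, ν (Prod.mk x ⁻¹' {q : ℝ × ℝ | q.1 = q.2}) = 0 := by
      intro x
      have hx : Prod.mk x ⁻¹' {q : ℝ × ℝ | q.1 = q.2} = {x} := by
        ext y; simp [eq_comm]
      rw [hx]; exact hcont x
    rw [lintegral_congr h0, lintegral_zero]
  set I : Set Ω := {ω | Function.Injective (T ω)} with hI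
  have hIeq : I = ⋂ (i) (j) (_ : i ≠ j), {ω | S i ω = S j ω}ᶜ := by
    ext ω
    simp only [hI, Set.mem_setOf_eq, Set.mem_iInter, Set.mem_compl_iff, Function.Injective, hT]
    constructor
    · intro h i j hij hEq; exact hij (h hEq)
    · intro h a b hab; by_contra hne; exact h a b hne hab
  have hImeas : MeasurableSet I := by
    rw [hIeq]
    exact MeasurableSet.iInter fun i => MeasurableSet.iInter fun j =>
      MeasurableSet.iInter fun _ => (measurableSet_eq_fun (hmeas i) (hmeas j)).compl
  have hIc : μ Iᶜ = 0 := by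
    have hsub : Iᶜ ⊆ ⋃ (q : Fin (n + 1) × Fin (n + 1)) (_ : q.1 ≠ q.2),
        {ω | S q.1 ω = S q.2 ω} := by
      intro ω hω
      simp only [hI, Set.mem_compl_iff, Set.mem_setOf_eq, Function.Injective, hT] at hω
      push_neg at hω
      obtain ⟨a, b, hab, hne⟩ := hω
      exact Set.mem_iUnion.2 ⟨(a, b), Set.mem_iUnion.2 ⟨hne, hab⟩⟩
    refine measure_mono_null hsub (measure_iUnion_null fun q => ?_)
    by_cases hq : q.1 = q.2
    · simp [hq]
    · simp [hq, hdiag q.1 q.2 hq]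
  have hIone : μ I = 1 := by
    have h := measure_add_measure_compl (μ := μ) hImeas
    rw [hIc, add_zero] at h
    simpa using h
  -- the events B j m
  set B : Fin (n + 1) → ℕ → Set (Fin (n + 1) → ℝ) := fun j m => {x | rk j x = m} with hB
  have hBmeas : ∀ j m, MeasurableSet (B j m) := fun j m =>
    rk_measurable j (measurableSet_singleton m)
  -- permutation invariance: π (B j m) = π (B 0 m)
  have hperm : ∀ (j : Fin (n + 1)) (m : ℕ), π (B j m) = π (B 0 m) := by
    intro j m
    set e : Fin (n + 1) ≃ Fin (n + 1) := Equiv.swap 0 j with he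
    have hmp : MeasurePreserving (MeasurableEquiv.arrowCongr' e (MeasurableEquiv.refl ℝ)) π π :=
      measurePreserving_arrowCongr' (fun _ => ν) (fun _ => ν) e (MeasurableEquiv.refl ℝ)
        (fun _ => MeasurePreserving.id ν)
    have happ : ∀ x : Fin (n + 1) → ℝ,
        (MeasurableEquiv.arrowCongr' e (MeasurableEquiv.refl ℝ)) x = fun i => x (e.symm i) := by
      intro x; rfl
    have hpre : (MeasurableEquiv.arrowCongr' e (MeasurableEquiv.refl ℝ)) ⁻¹' (B j m) = B 0 m := by
      ext x
      simp only [Set.mem_preimage, hB, Set.mem_setOf_eq, happ]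
      have h1 : rk j (fun i => x (e.symm i)) = rk 0 x := by
        unfold rk
        have h2 : (fun i => x (e.symm i)) j = x 0 := by
          simp [he, Equiv.symm_swap, Equiv.swap_apply_right]
        rw [h2]
        exact card_filter_comp e.symm (fun i => x 0 < x i)
      rw [h1]
    have := hmp.measure_preimage (hBmeas j m).nullMeasurableSet
    rw [hpre] at this
    exact this.symm
  -- sum over j equals 1
  have hsum : ∀ m : ℕ, m ≤ n → ((n : ENNReal) + 1) * π (B 0 m) = 1 := by
    intro m hm
    set E : Fin (n + 1) → Set Ω := fun j => T ⁻¹' (B j m) ∩ I with hE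
    have hEmeas : ∀ j, MeasurableSet (E j) := fun j =>
      (hTmeas (hBmeas j m)).inter hImeas
    have hdisj : Pairwise (Function.onFun Disjoint E) := by
      intro j j' hjj'
      refine Set.disjoint_left.2 fun ω hωj hωj' => ?_
      have hinj : Function.Injective (T ω) := hωj.2
      have h1 : rk j (T ω) = m := hωj.1
      have h2 : rk j' (T ω) = m := hωj'.1
      exact hjj' (rk_injective hinj (h1.trans h2.symm))
    have hcover : (⋃ j, E j) = I := by
      ext ω
      simp only [Set.mem_iUnion, hE, Set.mem_inter_iff, Set.mem_preimage, hB, Set.mem_setOf_eq]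
      constructor
      · rintro ⟨j, _, hωI⟩; exact hωI
      · intro hωI
        obtain ⟨j, hj, -⟩ := rk_existsUnique (x := T ω) hωI hm
        exact ⟨j, hj, hωI⟩
    have hsum1 : ∑ j : Fin (n + 1), μ (E j) = 1 := by
      rw [← tsum_fintype (L := .unconditional _), ← measure_iUnion hdisj hEmeas, hcover, hIone]
    have hEeq : ∀ j, μ (E j) = π (B 0 m) := by
      intro j
      rw [hE]
      simp only
      rw [measure_inter_conull hIc, ← Measure.map_apply hTmeas (hBmeas j m), hmap, hperm j m]
    rw [Finset.sum_congr rfl (fun j _ => hEeq j)] at hsum1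
    simpa [Finset.sum_const, Finset.card_univ, mul_comm] using hsum1
  -- conclude
  intro k hk1 hk2
  obtain ⟨m, rfl⟩ : ∃ m, k = m + 1 := ⟨k - 1, by omega⟩
  have hm : m ≤ n := by omega
  have hπB : π (B 0 m) = 1 / ((n : ENNReal) + 1) :=
    (ENNReal.eq_div_iff (by simp) (by simp)).2 (hsum m hm)
  have hIae : ∀ᵐ ω ∂μ, ω ∈ I := by
    rw [ae_iff]
    exact hIc
  have hseq : {ω | p ω = ((m + 1 : ℕ) : ℝ) / (n + 1)} =ᵐ[μ] T ⁻¹' (B 0 m) := by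
    rw [Filter.eventuallyEq_set]
    filter_upwards [hIae] with ω hω
    have hcard : ((Finset.univ.filter (fun i : Fin n => S i.succ ω ≥ S 0 ω)).card)
        = rk 0 (T ω) := card_succ_eq_rk hω
    simp only [Set.mem_setOf_eq, Set.mem_preimage, hB, hp ω, hcard]
    have hne : ((n : ℝ) + 1) ≠ 0 := by positivity
    rw [div_eq_div_iff hne hne]
    constructor
    · intro h
      have h2 : 1 + rk 0 (T ω) = m + 1 := by
        have := mul_right_cancel₀ hne h
        exact_mod_cast this
      omega
    · intro h
      rw [h]
      push_cast
      ring
  rw [measure_congr hseq, ← Measure.map_apply hTmeas (hBmeas 0 m), hmap, hπB]
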